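/- Let S ⊂ ℤ be a finite integer interval with 0 ∈ S, let p : S → A be a pattern, and let x ∈ A^ℤ. Suppose t, r ∈ S with t < r satisfy (t·x)|_S = (r·x)|_S = p, and set m := r − t. Then p is constant on residue classes modulo m: for all s₁, s₂ ∈ S with s₁ ≡ s₂ (mod m), one has p(s₁) = p(s₂). -/

import Mathlib

/-- Let `S` be a finite integer interval with `0 ∈ S`, `p : S → A`
and `x ∈ A^ℤ`. If `t, r ∈ S` with `t < r` satisfy `(t·x)|_S = (r·x)|_S = p`, then
`p` is constant on residue classes modulo `m := r - t` intersected with `S`. -/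
theorem pattern_constant_on_residue_classes
    {A : Type*}
    (a b : ℤ) (S : Finset ℤ) (hS : S = Finset.Icc a b) (h0 : (0 : ℤ) ∈ S)
    (p : S → A) (x : ℤ → A)
    (t r : ℤ) (htS : t ∈ S) (hrS : r ∈ S) (htr : t < r)
    (hxt : (fun s : S => x (s.1 + t)) = p)
    (hxr : (fun s : S => x (s.1 + r)) = p) :
    ∀ (s₁ s₂ : ℤ) (h₁ : s₁ ∈ S) (h₂ : s₂ ∈ S),
      Int.ModEq (r - t) s₁ s₂ → p ⟨s₁, h₁⟩ = p ⟨s₂, h₂⟩ := by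
  set m := r - t with hm
  have hmpos : 0 < m := by omega
  -- step lemma
  have step : ∀ (s : ℤ) (hs : s ∈ S) (hs' : s + m ∈ S),
      p ⟨s, hs⟩ = p ⟨s + m, hs'⟩ := by
    intro s hs hs'
    have h1 := congrFun hxr ⟨s, hs⟩
    have h2 := congrFun hxt ⟨s + m, hs'⟩
    simp only at h1 h2
    rw [← h1, ← h2]
    congr 1; rw [hm]; ring
  -- constancy along nonneg multiples
  have main : ∀ (n : ℕ) (s : ℤ) (hs : s ∈ S) (hs' : s + n * m ∈ S),
      p ⟨s, hs⟩ = p ⟨s + n * m, hs'⟩ := by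
    intro n
    induction n with
    | zero => intro s hs hs'; congr 1; simp
    | succ k ih =>
      intro s hs hs'
      have hsm : s + m ∈ S := by
        rw [hS] at hs hs' ⊢
        simp only [Finset.mem_Icc] at *
        push_cast at hs'
        constructor <;> nlinarith [hs.1, hs.2, hs'.1, hs'.2, hmpos, Nat.cast_nonneg (α := ℤ) k]
      have hs'' : s + m + (k : ℤ) * m ∈ S := by
        have h : s + m + (k : ℤ) * m = s + ((k + 1 : ℕ) : ℤ) * m := by push_cast; ring
        rw [h]; exact hs'
      calc p ⟨s, hs⟩ = p ⟨s + m, hsm⟩ := step s hs hsm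
        _ = p ⟨s + m + (k : ℤ) * m, hs''⟩ := ih (s + m) hsm hs''
        _ = p ⟨s + ((k + 1 : ℕ) : ℤ) * m, hs'⟩ := by congr 1; push_cast; ring
  intro s₁ s₂ h₁ h₂ hmod
  rcases le_total s₁ s₂ with hle | hle
  · obtain ⟨k, hk⟩ := (Int.modEq_iff_dvd.mp hmod)
    have hk0 : 0 ≤ k := by nlinarith
    obtain ⟨n, rfl⟩ := Int.eq_ofNat_of_zero_le hk0
    have : s₂ = s₁ + n * m := by push_cast at hk ⊢; linarith
    subst this
    exact main n s₁ h₁ h₂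
  · obtain ⟨k, hk⟩ := (Int.modEq_iff_dvd.mp hmod.symm)
    have hk0 : 0 ≤ k := by nlinarith
    obtain ⟨n, rfl⟩ := Int.eq_ofNat_of_zero_le hk0
    have : s₁ = s₂ + n * m := by push_cast at hk ⊢; linarith
    subst this
    exact (main n s₂ h₂ h₁).symm
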